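/- Let u, v : [0,∞) → ℝ be the solution of the ODE system u' = -au + H(v), v' = -bv + G(u) with u(0), v(0) > 0, where a, b > 0 and H, G satisfy (H1). If R₀ = H'(0)G'(0)/(ab) < 1, then (u(t), v(t)) → (0,0) as t → ∞; if R₀ > 1, then (u(t), v(t)) → (U, V), the unique positive equilibrium. -/

import Mathlib

open Set Filter

/-- exponential decay estimate -/
lemma my_decay_le {c M T : ℝ} (hc : 0 < c) {f f' : ℝ → ℝ}
    (hf : ∀ t ≥ T, HasDerivAt f (f' t) t)
    (hbnd : ∀ t ≥ T, f' t ≤ -c * (f t - M)) :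
    ∀ t ≥ T, f t ≤ M + (f T - M) * Real.exp (-c * (t - T)) := by
  intro t ht
  set g : ℝ → ℝ := fun s => (f s - M) * Real.exp (c * s) with hg
  have hgd : ∀ s ≥ T, HasDerivAt g ((f' s + c * (f s - M)) * Real.exp (c * s)) s := by
    intro s hs
    have h1 : HasDerivAt (fun s => Real.exp (c * s)) (c * Real.exp (c * s)) s := by
      simpa [mul_comm] using ((hasDerivAt_id s).const_mul c).exp
    have := ((hf s hs).sub_const M).fun_mul h1
    exact this.congr_deriv (by ring)
  have hanti : AntitoneOn g (Ici T) := by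
    apply antitoneOn_of_deriv_nonpos (convex_Ici T)
    · intro s hs; exact ((hgd s hs).continuousAt).continuousWithinAt
    · intro s hs
      rw [interior_Ici] at hs
      exact ((hgd s (le_of_lt hs)).differentiableAt).differentiableWithinAt
    · intro s hs
      rw [interior_Ici] at hs
      rw [(hgd s (le_of_lt hs)).deriv]
      have h2 := hbnd s (le_of_lt hs)
      have h3 : f' s + c * (f s - M) ≤ 0 := by nlinarith
      have h4 : (0:ℝ) ≤ Real.exp (c * s) := Real.exp_nonneg _
      nlinarith [mul_nonneg (neg_nonneg.2 h3) h4]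
  have := hanti (self_mem_Ici) (mem_Ici.2 ht) ht
  -- g t ≤ g T
  have hgt : (f t - M) * Real.exp (c * t) ≤ (f T - M) * Real.exp (c * T) := this
  have hepos : (0:ℝ) < Real.exp (c * t) := Real.exp_pos _
  have key : f t - M ≤ (f T - M) * Real.exp (-c * (t - T)) := by
    have hee : Real.exp (-c * (t - T)) * Real.exp (c * t) = Real.exp (c * T) := by
      rw [← Real.exp_add]; ring_nf
    rw [← mul_le_mul_iff_of_pos_right hepos, mul_assoc, hee]
    exact hgt
  linarith

lemma my_decay_eventually {c M M' T : ℝ} (hc : 0 < c) (hM : M < M') {f f' : ℝ → ℝ}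
    (hf : ∀ t ≥ T, HasDerivAt f (f' t) t)
    (hbnd : ∀ t ≥ T, f' t ≤ -c * (f t - M)) :
    ∃ T' ≥ T, ∀ t ≥ T', f t ≤ M' := by
  have key := my_decay_le hc hf hbnd
  have h1 : Tendsto (fun t : ℝ => t - T) atTop atTop := tendsto_atTop_add_const_right _ _ tendsto_id
  have h2 : Tendsto (fun t : ℝ => -c * (t - T)) atTop atBot :=
    h1.const_mul_atTop_of_neg (by linarith)
  have h3 : Tendsto (fun t : ℝ => M + (f T - M) * Real.exp (-c * (t - T))) atTop (nhds M) := by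
    have := (Real.tendsto_exp_atBot.comp h2).const_mul (f T - M)
    simpa using (this.const_add M)
  have h4 : ∀ᶠ t in atTop, M + (f T - M) * Real.exp (-c * (t - T)) < M' :=
    h3.eventually_lt_const hM
  rw [eventually_atTop] at h4
  obtain ⟨T0, hT0⟩ := h4
  refine ⟨max T T0, le_max_left _ _, fun t ht => ?_⟩
  have htT : t ≥ T := le_trans (le_max_left _ _) ht
  exact le_of_lt (lt_of_le_of_lt (key t htT) (hT0 t (le_trans (le_max_right _ _) ht)))

lemma my_inv {a b K1 K2 : ℝ} (ha : 0 < a) (hb : 0 < b) {f g f' g' : ℝ → ℝ}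
    (hf : ∀ t ≥ (0:ℝ), HasDerivAt f (f' t) t) (hg : ∀ t ≥ (0:ℝ), HasDerivAt g (g' t) t)
    (hfb : ∀ t ≥ (0:ℝ), g t ≤ K2 → f' t ≤ -a * (f t - K1))
    (hgb : ∀ t ≥ (0:ℝ), f t ≤ K1 → g' t ≤ -b * (g t - K2))
    (hf0 : f 0 < K1) (hg0 : g 0 < K2) :
    ∀ t ≥ (0:ℝ), f t < K1 ∧ g t < K2 := by
  by_contra hcon
  push_neg at hcon
  obtain ⟨t0, ht0, hbad⟩ := hcon
  set B : Set ℝ := {t | 0 ≤ t ∧ (K1 ≤ f t ∨ K2 ≤ g t)} with hB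
  have hne : B.Nonempty := by
    refine ⟨t0, ht0, ?_⟩
    by_cases h : f t0 < K1
    · exact Or.inr (hbad h)
    · exact Or.inl (le_of_not_gt h)
  have hbdd : BddBelow B := ⟨0, fun x hx => hx.1⟩
  set T := sInf B with hT
  have hT0 : 0 ≤ T := le_csInf hne (fun x hx => hx.1)
  have hnotlt : ∀ s, 0 ≤ s → s < T → f s < K1 ∧ g s < K2 := by
    intro s hs hsT
    by_contra hc
    push_neg at hc
    have hsB : s ∈ B := by
      refine ⟨hs, ?_⟩
      by_cases h : f s < K1
      · exact Or.inr (hc h)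
      · exact Or.inl (le_of_not_gt h)
    exact absurd (csInf_le hbdd hsB) (not_le.2 hsT)
  -- T ∈ B
  have hTB : T ∈ B := by
    by_contra hTnB
    have hfT : f T < K1 ∧ g T < K2 := by
      rcases (lt_or_ge (f T) K1) with h1 | h1
      · rcases (lt_or_ge (g T) K2) with h2 | h2
        · exact ⟨h1, h2⟩
        · exact absurd ⟨hT0, Or.inr h2⟩ hTnB
      · exact absurd ⟨hT0, Or.inl h1⟩ hTnB
    have hcf : ContinuousAt f T := (hf T hT0).continuousAt
    have hcg : ContinuousAt g T := (hg T hT0).continuousAt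
    have hev : ∀ᶠ s in nhds T, f s < K1 ∧ g s < K2 :=
      (hcf.eventually_lt_const hfT.1).and (hcg.eventually_lt_const hfT.2)
    obtain ⟨ε, hε, hball⟩ := Metric.eventually_nhds_iff.1 hev
    have : T + ε/2 ∈ lowerBounds B := by
      intro x hx
      by_contra hxlt
      push_neg at hxlt
      have hxT : T ≤ x := csInf_le hbdd hx
      have : f x < K1 ∧ g x < K2 := by
        apply hball
        rw [Real.dist_eq, abs_lt]
        constructor <;> linarith
      rcases hx.2 with h | h
      · exact absurd h (not_le.2 this.1)
      · exact absurd h (not_le.2 this.2)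
    have := le_csInf hne this
    linarith [hε]
  -- T > 0
  have hTpos : 0 < T := by
    rcases lt_or_eq_of_le hT0 with h | h
    · exact h
    · exfalso
      rcases hTB.2 with h1 | h1 <;> rw [← h] at h1 <;> linarith
  -- bounds at T by left continuity
  have hfle : ∀ s ∈ Icc (0:ℝ) T, f s ≤ K1 ∧ g s ≤ K2 := by
    intro s hs
    rcases lt_or_eq_of_le hs.2 with h | h
    · have := hnotlt s hs.1 h
      exact ⟨le_of_lt this.1, le_of_lt this.2⟩
    · rw [h]
      have hcf : ContinuousAt f T := (hf T hT0).continuousAt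
      have hcg : ContinuousAt g T := (hg T hT0).continuousAt
      have hne' : (nhdsWithin T (Ioo 0 T)).NeBot := right_nhdsWithin_Ioo_neBot hTpos
      constructor
      · refine le_of_tendsto ((hcf.continuousWithinAt (s := Ioo 0 T)).tendsto) ?_
        filter_upwards [self_mem_nhdsWithin] with x hx
        exact le_of_lt (hnotlt x (le_of_lt hx.1) hx.2).1
      · refine le_of_tendsto ((hcg.continuousWithinAt (s := Ioo 0 T)).tendsto) ?_
        filter_upwards [self_mem_nhdsWithin] with x hx
        exact le_of_lt (hnotlt x (le_of_lt hx.1) hx.2).2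
  -- now exponential argument on [0,T] for f
  have main : ∀ (c K : ℝ) (p p' : ℝ → ℝ), 0 < c → (∀ t ≥ (0:ℝ), HasDerivAt p (p' t) t) →
      (∀ s ∈ Icc (0:ℝ) T, p' s ≤ -c * (p s - K)) → p 0 < K → p T < K := by
    intro c K p p' hc hp hbnd hp0
    set q : ℝ → ℝ := fun s => (p s - K) * Real.exp (c * s) with hq
    have hqd : ∀ s ≥ (0:ℝ), HasDerivAt q ((p' s + c * (p s - K)) * Real.exp (c * s)) s := by
      intro s hs
      have h1 : HasDerivAt (fun s => Real.exp (c * s)) (c * Real.exp (c * s)) s := by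
        simpa [mul_comm] using ((hasDerivAt_id s).const_mul c).exp
      have := ((hp s hs).sub_const K).fun_mul h1
      exact this.congr_deriv (by ring)
    have hanti : AntitoneOn q (Icc 0 T) := by
      apply antitoneOn_of_deriv_nonpos (convex_Icc 0 T)
      · intro s hs; exact ((hqd s hs.1).continuousAt).continuousWithinAt
      · intro s hs
        rw [interior_Icc] at hs
        exact ((hqd s (le_of_lt hs.1)).differentiableAt).differentiableWithinAt
      · intro s hs
        rw [interior_Icc] at hs
        rw [(hqd s (le_of_lt hs.1)).deriv]
        have h2 := hbnd s ⟨le_of_lt hs.1, le_of_lt hs.2⟩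
        have h3 : p' s + c * (p s - K) ≤ 0 := by nlinarith
        have h4 : (0:ℝ) ≤ Real.exp (c * s) := Real.exp_nonneg _
        nlinarith [mul_nonneg (neg_nonneg.2 h3) h4]
    have hle := hanti (left_mem_Icc.2 (le_of_lt hTpos)) (right_mem_Icc.2 (le_of_lt hTpos)) (le_of_lt hTpos)
    have h5 : q 0 < 0 := by
      simp only [hq]
      have : (0:ℝ) < Real.exp (c * 0) := Real.exp_pos _
      nlinarith
    have h6 : (p T - K) * Real.exp (c * T) < 0 := lt_of_le_of_lt hle h5
    nlinarith [Real.exp_pos (c * T)]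
  have hfT : f T < K1 := by
    apply main a K1 f f' ha hf _ hf0
    intro s hs
    exact hfb s hs.1 (hfle s hs).2
  have hgT : g T < K2 := by
    apply main b K2 g g' hb hg _ hg0
    intro s hs
    exact hgb s hs.1 (hfle s hs).1
  rcases hTB.2 with h | h
  · exact absurd h (not_le.2 hfT)
  · exact absurd h (not_le.2 hgT)

set_option maxHeartbeats 1000000 in
theorem stmt_15 (a b : ℝ) (ha : 0 < a) (hb : 0 < b)
    (H G H' G' : ℝ → ℝ)
    (hH : ∀ z ∈ Ici (0:ℝ), HasDerivWithinAt H (H' z) (Ici 0) z)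
    (hG : ∀ z ∈ Ici (0:ℝ), HasDerivWithinAt G (G' z) (Ici 0) z)
    (hH'c : ContinuousOn H' (Ici 0)) (hG'c : ContinuousOn G' (Ici 0))
    (hH0 : H 0 = 0) (hG0 : G 0 = 0)
    (hH'pos : ∀ z ∈ Ici (0:ℝ), 0 < H' z) (hG'pos : ∀ z ∈ Ici (0:ℝ), 0 < G' z)
    (hHdec : AntitoneOn (fun z => H z / z) (Ioi 0))
    (hGdec : StrictAntiOn (fun z => G z / z) (Ioi 0))
    (hhat : ∃ zh > 0, G (H zh / a) < b * zh)
    (u v : ℝ → ℝ)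
    (hu : ∀ t ≥ (0:ℝ), HasDerivAt u (-(a * u t) + H (v t)) t)
    (hv : ∀ t ≥ (0:ℝ), HasDerivAt v (-(b * v t) + G (u t)) t)
    (hu0 : 0 < u 0) (hv0 : 0 < v 0) :
    (H' 0 * G' 0 / (a * b) < 1 →
      Tendsto (fun t => (u t, v t)) atTop (nhds ((0:ℝ), (0:ℝ)))) ∧
    (1 < H' 0 * G' 0 / (a * b) →
      ∃ U V : ℝ, 0 < U ∧ 0 < V ∧ a * U = H V ∧ b * V = G U ∧
        (∀ U' V' : ℝ, 0 < U' → 0 < V' → a * U' = H V' → b * V' = G U' →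
          U' = U ∧ V' = V) ∧
        Tendsto (fun t => (u t, v t)) atTop (nhds (U, V))) := by
  -- monotonicity of H and G on [0, ∞)
  have Hmono : StrictMonoOn H (Ici 0) := by
    apply strictMonoOn_of_hasDerivWithinAt_pos (convex_Ici 0)
      (fun z hz => (hH z hz).continuousWithinAt)
    · intro z hz
      rw [interior_Ici] at hz ⊢
      exact ((hH z (mem_Ici.2 (le_of_lt hz))).mono (Ioi_subset_Ici_self))
    · intro z hz
      rw [interior_Ici] at hz
      exact hH'pos z (mem_Ici.2 (le_of_lt hz))
  have Gmono : StrictMonoOn G (Ici 0) := by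
    apply strictMonoOn_of_hasDerivWithinAt_pos (convex_Ici 0)
      (fun z hz => (hG z hz).continuousWithinAt)
    · intro z hz
      rw [interior_Ici] at hz ⊢
      exact ((hG z (mem_Ici.2 (le_of_lt hz))).mono (Ioi_subset_Ici_self))
    · intro z hz
      rw [interior_Ici] at hz
      exact hG'pos z (mem_Ici.2 (le_of_lt hz))
  have Hpos : ∀ z, 0 < z → 0 < H z := by
    intro z hz
    have := Hmono (self_mem_Ici) (mem_Ici.2 (le_of_lt hz)) hz
    rwa [hH0] at this
  have Gpos : ∀ z, 0 < z → 0 < G z := by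
    intro z hz
    have := Gmono (self_mem_Ici) (mem_Ici.2 (le_of_lt hz)) hz
    rwa [hG0] at this
  have Hnonneg : ∀ z, 0 ≤ z → 0 ≤ H z := by
    intro z hz
    rcases eq_or_lt_of_le hz with h | h
    · rw [← h, hH0]
    · exact le_of_lt (Hpos z h)
  -- slope limits at 0
  have Hslope : Tendsto (fun w => H w / w) (nhdsWithin 0 (Ioi 0)) (nhds (H' 0)) := by
    have := (hasDerivWithinAt_iff_tendsto_slope).1 (hH 0 self_mem_Ici)
    have heq : Ici (0:ℝ) \ {0} = Ioi 0 := Ici_sdiff_left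
    rw [heq] at this
    refine this.congr (fun w => ?_)
    simp [slope, hH0, div_eq_inv_mul]
  have Gslope : Tendsto (fun w => G w / w) (nhdsWithin 0 (Ioi 0)) (nhds (G' 0)) := by
    have := (hasDerivWithinAt_iff_tendsto_slope).1 (hG 0 self_mem_Ici)
    have heq : Ici (0:ℝ) \ {0} = Ioi 0 := Ici_sdiff_left
    rw [heq] at this
    refine this.congr (fun w => ?_)
    simp [slope, hG0, div_eq_inv_mul]
  -- sublinear bounds
  have Hsub : ∀ z, 0 < z → H z ≤ H' 0 * z := by
    intro z hz
    have hev : ∀ᶠ w in nhdsWithin 0 (Ioi 0), H z / z ≤ H w / w := by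
      filter_upwards [Ioo_mem_nhdsGT_of_mem (Set.mem_Ico.2 ⟨le_refl 0, hz⟩)] with w hw
      exact hHdec hw.1 hz (le_of_lt hw.2)
    have := ge_of_tendsto Hslope hev
    rw [div_le_iff₀ hz] at this
    linarith [this]
  have Gsub : ∀ z, 0 < z → G z ≤ G' 0 * z := by
    intro z hz
    have hev : ∀ᶠ w in nhdsWithin 0 (Ioi 0), G z / z ≤ G w / w := by
      filter_upwards [Ioo_mem_nhdsGT_of_mem (Set.mem_Ico.2 ⟨le_refl 0, hz⟩)] with w hw
      exact le_of_lt (hGdec hw.1 hz hw.2)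
    have := ge_of_tendsto Gslope hev
    rw [div_le_iff₀ hz] at this
    linarith [this]
  -- scaling inequalities
  have Hup : ∀ z l, 0 < z → 1 ≤ l → H (l*z) ≤ l * H z := by
    intro z l hz hl
    rcases eq_or_lt_of_le hl with h | h
    · rw [← h, one_mul, one_mul]
    · have h1 : H (l*z) / (l*z) ≤ H z / z :=
        hHdec (mem_Ioi.2 hz) (mem_Ioi.2 (by nlinarith)) (by nlinarith)
      rw [div_le_div_iff₀ (by nlinarith) hz] at h1
      nlinarith
  have Hdown : ∀ z e, 0 < z → 0 < e → e ≤ 1 → e * H z ≤ H (e*z) := by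
    intro z e hz he he1
    rcases eq_or_lt_of_le he1 with h | h
    · rw [h, one_mul, one_mul]
    · have h1 : H z / z ≤ H (e*z) / (e*z) :=
        hHdec (mem_Ioi.2 (by nlinarith : (0:ℝ) < e*z)) (mem_Ioi.2 hz) (by nlinarith)
      rw [div_le_div_iff₀ hz (by nlinarith)] at h1
      nlinarith
  have Gup : ∀ z l, 0 < z → 1 ≤ l → G (l*z) ≤ l * G z := by
    intro z l hz hl
    rcases eq_or_lt_of_le hl with h | h
    · rw [← h, one_mul, one_mul]
    · have h1 : G (l*z) / (l*z) ≤ G z / z :=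
        le_of_lt (hGdec (mem_Ioi.2 hz) (mem_Ioi.2 (by nlinarith)) (by nlinarith))
      rw [div_le_div_iff₀ (by nlinarith) hz] at h1
      nlinarith
  have Gup_strict : ∀ z l, 0 < z → 1 < l → G (l*z) < l * G z := by
    intro z l hz hl
    have h1 : G (l*z) / (l*z) < G z / z :=
      hGdec (mem_Ioi.2 hz) (mem_Ioi.2 (by nlinarith)) (by nlinarith)
    rw [div_lt_div_iff₀ (by nlinarith) hz] at h1
    nlinarith
  have Gdown : ∀ z e, 0 < z → 0 < e → e ≤ 1 → e * G z ≤ G (e*z) := by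
    intro z e hz he he1
    rcases eq_or_lt_of_le he1 with h | h
    · rw [h, one_mul, one_mul]
    · have h1 : G z / z ≤ G (e*z) / (e*z) :=
        le_of_lt (hGdec (mem_Ioi.2 (by nlinarith : (0:ℝ) < e*z)) (mem_Ioi.2 hz) (by nlinarith))
      rw [div_le_div_iff₀ hz (by nlinarith)] at h1
      nlinarith
  have Gdown_strict : ∀ z e, 0 < z → 0 < e → e < 1 → e * G z < G (e*z) := by
    intro z e hz he he1
    have h1 : G z / z < G (e*z) / (e*z) :=
      hGdec (mem_Ioi.2 (by nlinarith : (0:ℝ) < e*z)) (mem_Ioi.2 hz) (by nlinarith)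
    rw [div_lt_div_iff₀ hz (by nlinarith)] at h1
    nlinarith
  -- positivity of solutions
  have pos : ∀ t ≥ (0:ℝ), 0 < u t ∧ 0 < v t := by
    have := my_inv ha hb (f := fun t => -u t) (g := fun t => -v t)
      (f' := fun t => -(-(a*u t) + H (v t))) (g' := fun t => -(-(b*v t) + G (u t)))
      (fun t ht => (hu t ht).neg) (fun t ht => (hv t ht).neg)
      (K1 := 0) (K2 := 0) ?_ ?_ (by simpa using hu0) (by simpa using hv0)
    · intro t ht
      have h := this t ht
      have h1 : -u t < 0 := h.1
      have h2 : -v t < 0 := h.2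
      exact ⟨by linarith, by linarith⟩
    · intro t ht hvt
      beta_reduce at hvt ⊢
      have : 0 ≤ H (v t) := Hnonneg _ (by linarith)
      nlinarith
    · intro t ht hut
      beta_reduce at hut ⊢
      have : 0 ≤ G (u t) := by
        rcases eq_or_lt_of_le (by linarith : (0:ℝ) ≤ u t) with h | h
        · rw [← h, hG0]
        · exact le_of_lt (Gpos _ h)
      nlinarith
  constructor
  · -- case R0 < 1
    intro hR
    have hlt : H' 0 * G' 0 < a * b := by
      rw [div_lt_one (by positivity)] at hR; exact hR
    have hH'0 : 0 < H' 0 := hH'pos 0 self_mem_Ici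
    have hG'0 : 0 < G' 0 := hG'pos 0 self_mem_Ici
    obtain ⟨α, hα0, hαl, hαr⟩ : ∃ α : ℝ, 0 < α ∧ H' 0 < a * α ∧ G' 0 * α < b := by
      refine ⟨(H' 0 / a + b / G' 0) / 2, ?_, ?_, ?_⟩
      · positivity
      · have h1 : H' 0 / a < b / G' 0 := by
          rw [div_lt_div_iff₀ ha hG'0]; nlinarith
        have h2 : H' 0 / a < (H' 0 / a + b / G' 0) / 2 := by linarith
        have := (div_lt_iff₀ ha).1 h2; linarith
      · have h1 : H' 0 / a < b / G' 0 := by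
          rw [div_lt_div_iff₀ ha hG'0]; nlinarith
        have h3 : (H' 0 / a + b / G' 0) / 2 < b / G' 0 := by linarith
        have := (lt_div_iff₀ hG'0).1 h3; nlinarith
    obtain ⟨q, hq0, hq1, hqG, hqH⟩ :
        ∃ q : ℝ, 0 < q ∧ q < 1 ∧ G' 0 * α ≤ q * b ∧ H' 0 ≤ q * (a*α) := by
      refine ⟨max (G' 0 * α / b) (H' 0 / (a*α)), ?_, ?_, ?_, ?_⟩
      · exact lt_of_lt_of_le (by positivity) (le_max_left _ _)
      · apply max_lt
        · rw [div_lt_one hb]; exact hαr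
        · rw [div_lt_one (by positivity)]; exact hαl
      · have := le_max_left (G' 0 * α / b) (H' 0 / (a*α))
        rw [div_le_iff₀ hb] at this; linarith
      · have := le_max_right (G' 0 * α / b) (H' 0 / (a*α))
        rw [div_le_iff₀ (by positivity)] at this; linarith
    obtain ⟨r, hr0, hqr, hr1⟩ : ∃ r : ℝ, 0 < r ∧ q < r ∧ r < 1 :=
      ⟨(1+q)/2, by linarith, by linarith, by linarith⟩
    obtain ⟨c0, hc0, huc0, hvc0⟩ : ∃ c0 : ℝ, 0 < c0 ∧ u 0 < α*c0 ∧ v 0 < c0 := by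
      refine ⟨max (v 0) (u 0/α) + 1, ?_, ?_, ?_⟩
      · have := le_max_left (v 0) (u 0/α); linarith
      · have h4 : u 0/α < max (v 0) (u 0/α) + 1 := by
          have := le_max_right (v 0) (u 0/α); linarith
        have := (div_lt_iff₀ hα0).1 h4; nlinarith [le_max_left (v 0) (u 0/α)]
      · have := le_max_left (v 0) (u 0/α); linarith
    -- global initial bound
    have B0 : ∀ t ≥ (0:ℝ), u t < α*c0 ∧ v t < c0 := by
      apply my_inv ha hb (f' := fun t => -(a*u t) + H (v t))
        (g' := fun t => -(b*v t) + G (u t)) hu hv _ _ huc0 hvc0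
      · intro t ht hvt
        show -(a*u t) + H (v t) ≤ -a*(u t - α*c0)
        have hv0t := (pos t ht).2
        have hm : H (v t) ≤ H c0 := Hmono.monotoneOn (mem_Ici.2 (le_of_lt hv0t))
          (mem_Ici.2 (le_of_lt hc0)) hvt
        have hs := Hsub c0 hc0
        nlinarith [mul_pos hα0 hc0, mul_le_mul_of_nonneg_right hqH (le_of_lt hc0),
          mul_pos (mul_pos ha hα0) hc0]
      · intro t ht hut
        show -(b*v t) + G (u t) ≤ -b*(v t - c0)
        have hu0t := (pos t ht).1
        have hm : G (u t) ≤ G (α*c0) := Gmono.monotoneOn (mem_Ici.2 (le_of_lt hu0t))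
          (mem_Ici.2 (by positivity)) hut
        have hs := Gsub (α*c0) (by positivity)
        nlinarith [mul_le_mul_of_nonneg_right hqG (le_of_lt hc0), mul_pos hb hc0]
    -- iteration step
    have step : ∀ c, 0 < c → (∃ T, 0 ≤ T ∧ ∀ t ≥ T, u t ≤ α*c ∧ v t ≤ c) →
        (∃ T, 0 ≤ T ∧ ∀ t ≥ T, u t ≤ α*(r*c) ∧ v t ≤ r*c) := by
      rintro c hc ⟨T, hT, hTb⟩
      obtain ⟨T1, hT1, hT1b⟩ := my_decay_eventually (c := b) (M := q*c) (M' := r*c)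
        (T := T) hb (by nlinarith [mul_lt_mul_of_pos_right hqr hc]) (f := v) (f' := fun t => -(b*v t) + G (u t))
        (fun t ht => hv t (le_trans hT ht))
        (by
          intro t ht
          have htt : t ≥ (0:ℝ) := le_trans hT ht
          have hu0t := (pos t htt).1
          have hm : G (u t) ≤ G (α*c) := Gmono.monotoneOn (mem_Ici.2 (le_of_lt hu0t))
            (mem_Ici.2 (by positivity)) (hTb t ht).1
          have hs := Gsub (α*c) (by positivity)
          show -(b*v t) + G (u t) ≤ -b*(v t - q*c)
          nlinarith [mul_le_mul_of_nonneg_right hqG (le_of_lt hc)])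
      obtain ⟨T2, hT2, hT2b⟩ := my_decay_eventually (c := a) (M := q*(α*(r*c)))
        (M' := α*(r*c)) (T := T1) ha
        (by nlinarith [mul_pos (mul_pos hα0 hr0) hc]) (f := u)
        (f' := fun t => -(a*u t) + H (v t))
        (fun t ht => hu t (le_trans (le_trans hT hT1) ht))
        (by
          intro t ht
          have htt : t ≥ (0:ℝ) := le_trans (le_trans hT hT1) ht
          have hv0t := (pos t htt).2
          have hm : H (v t) ≤ H (r*c) := Hmono.monotoneOn (mem_Ici.2 (le_of_lt hv0t))
            (mem_Ici.2 (by positivity)) (hT1b t ht)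
          have hs := Hsub (r*c) (by positivity)
          show -(a*u t) + H (v t) ≤ -a*(u t - q*(α*(r*c)))
          nlinarith [mul_le_mul_of_nonneg_right hqH (le_of_lt (mul_pos hr0 hc))])
      exact ⟨T2, le_trans (le_trans hT hT1) hT2,
        fun t ht => ⟨hT2b t ht, hT1b t (le_trans hT2 ht)⟩⟩
    -- induction
    have bnds : ∀ n : ℕ, ∃ T, 0 ≤ T ∧ ∀ t ≥ T, u t ≤ α*(c0*r^n) ∧ v t ≤ c0*r^n := by
      intro n
      induction n with
      | zero =>
        refine ⟨0, le_refl 0, fun t ht => ?_⟩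
        have := B0 t ht
        simp only [pow_zero, mul_one]
        exact ⟨le_of_lt this.1, le_of_lt this.2⟩
      | succ n ih =>
        obtain ⟨T, hT, hTb⟩ := step (c0*r^n) (by positivity) ih
        refine ⟨T, hT, fun t ht => ?_⟩
        have := hTb t ht
        constructor
        · calc u t ≤ α*(r*(c0*r^n)) := this.1
            _ = α*(c0*r^(n+1)) := by ring
        · calc v t ≤ r*(c0*r^n) := this.2
            _ = c0*r^(n+1) := by ring
    -- conclude
    have hgen : ∀ w : ℝ → ℝ, (∀ t ≥ (0:ℝ), 0 < w t) →
        (∀ n : ℕ, ∃ T, 0 ≤ T ∧ ∀ t ≥ T, w t ≤ (α+1)*(c0*r^n)) →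
        Tendsto w atTop (nhds 0) := by
      intro w hwpos hwb
      rw [Metric.tendsto_atTop]
      intro ε hε
      have hrn : Tendsto (fun n : ℕ => (α+1)*(c0*r^n)) atTop (nhds 0) := by
        have h5 := tendsto_pow_atTop_nhds_zero_of_lt_one (le_of_lt hr0) hr1
        have := (h5.const_mul c0).const_mul (α+1)
        simpa [mul_assoc] using this
      have := (hrn.eventually_lt_const hε).exists
      obtain ⟨n, hn⟩ := this
      obtain ⟨T, hT, hTb⟩ := hwb n
      refine ⟨T, fun t ht => ?_⟩
      have h6 : 0 < w t := hwpos t (le_trans hT ht)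
      have h7 := hTb t ht
      rw [Real.dist_eq, sub_zero, abs_of_pos h6]
      linarith
    have hu_t : Tendsto u atTop (nhds 0) := by
      apply hgen u (fun t ht => (pos t ht).1)
      intro n
      obtain ⟨T, hT, hTb⟩ := bnds n
      refine ⟨T, hT, fun t ht => ?_⟩
      have := (hTb t ht).1
      nlinarith [pow_pos hr0 n]
    have hv_t : Tendsto v atTop (nhds 0) := by
      apply hgen v (fun t ht => (pos t ht).2)
      intro n
      obtain ⟨T, hT, hTb⟩ := bnds n
      refine ⟨T, hT, fun t ht => ?_⟩
      have := (hTb t ht).2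
      nlinarith [pow_pos hr0 n]
    exact hu_t.prodMk_nhds hv_t
  · -- case R0 > 1
    intro hR
    have hH'0 : 0 < H' 0 := hH'pos 0 self_mem_Ici
    have hG'0 : 0 < G' 0 := hG'pos 0 self_mem_Ici
    have hgt : a * b < H' 0 * G' 0 := by
      rw [lt_div_iff₀ (by positivity)] at hR; linarith
    obtain ⟨zh, hzh, hzh2⟩ := hhat
    -- limit of G (H z / a) / z as z → 0+
    have hwlim : Tendsto (fun z => H z / a) (nhdsWithin 0 (Ioi 0)) (nhdsWithin 0 (Ioi 0)) := by
      apply tendsto_nhdsWithin_of_tendsto_nhds_of_eventually_within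
      · have h1 : Tendsto H (nhdsWithin 0 (Ici 0)) (nhds 0) := by
          have h2 := (hH 0 self_mem_Ici).continuousWithinAt
          rw [ContinuousWithinAt, hH0] at h2; exact h2
        have h2 : Tendsto H (nhdsWithin 0 (Ioi 0)) (nhds 0) :=
          h1.mono_left (nhdsWithin_mono 0 Ioi_subset_Ici_self)
        have h3 := h2.div_const a
        simpa using h3
      · filter_upwards [self_mem_nhdsWithin] with z hz
        exact mem_Ioi.2 (div_pos (Hpos z hz) ha)
    have hHa : Tendsto (fun z => H z / a / z) (nhdsWithin 0 (Ioi 0)) (nhds (H' 0 / a)) := by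
      have h1 := Hslope.div_const a
      apply h1.congr' ?_ |>.mono_left le_rfl
      filter_upwards [self_mem_nhdsWithin] with z hz
      rw [div_div, div_div, mul_comm z a]
    have hcomp : Tendsto (fun z => G (H z / a) / z) (nhdsWithin 0 (Ioi 0))
        (nhds (G' 0 * (H' 0 / a))) := by
      have h1 := (Gslope.comp hwlim).mul hHa
      apply h1.congr'
      filter_upwards [self_mem_nhdsWithin] with z hz
      have hz0 : (0:ℝ) < z := hz
      have hw : (0:ℝ) < H z / a := div_pos (Hpos z hz0) ha
      have hz' : z ≠ 0 := ne_of_gt hz0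
      show G (H z / a) / (H z / a) * (H z / a / z) = G (H z / a) / z
      rw [div_mul_div_comm, div_eq_div_iff (by positivity) hz']
      ring
    -- find z0 with b * z0 < G (H z0 / a) and z0 < zh
    have hblt : b < G' 0 * (H' 0 / a) := by
      rw [mul_div_assoc']
      rw [lt_div_iff₀ ha]; nlinarith
    have hev : ∀ᶠ z in nhdsWithin 0 (Ioi 0),
        (b < G (H z / a) / z ∧ z < zh) ∧ 0 < z := by
      refine (((hcomp.eventually_const_lt hblt).and ?_).and self_mem_nhdsWithin)
      filter_upwards [Ioo_mem_nhdsGT_of_mem (Set.mem_Ico.2 ⟨le_refl 0, hzh⟩)] with z hz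
      exact hz.2
    obtain ⟨z0, ⟨hz0b, hz0h⟩, hz0pos⟩ := hev.exists
    -- IVT to find the equilibrium V
    have hFcont : ContinuousOn (fun z => G (H z / a) - b*z) (Icc z0 zh) := by
      intro z hz
      have hzp : 0 < z := lt_of_lt_of_le hz0pos hz.1
      have hHat : ContinuousAt H z :=
        ((hH z (le_of_lt hzp)).hasDerivAt (Ici_mem_nhds hzp)).continuousAt
      have hwp : 0 < H z / a := div_pos (Hpos z hzp) ha
      have hGat : ContinuousAt G (H z / a) :=
        ((hG _ (le_of_lt hwp)).hasDerivAt (Ici_mem_nhds hwp)).continuousAt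
      exact ((hGat.comp (x := z) (hHat.div_const a)).sub
        ((continuousAt_id.const_mul b))).continuousWithinAt
    have hIVT : (0:ℝ) ∈ (fun z => G (H z / a) - b*z) '' (Icc z0 zh) := by
      apply intermediate_value_Icc' (le_of_lt hz0h) hFcont
      rw [Set.mem_Icc]
      constructor
      · show G (H zh / a) - b*zh ≤ 0
        linarith
      · show (0:ℝ) ≤ G (H z0 / a) - b*z0
        have := (lt_div_iff₀ hz0pos).1 hz0b
        nlinarith
    obtain ⟨V, hVmem, hVeq0⟩ := hIVT
    have hV0 : 0 < V := lt_of_lt_of_le hz0pos hVmem.1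
    have hVG : G (H V / a) = b * V := by
      have : G (H V / a) - b*V = 0 := hVeq0
      linarith
    have hU0 : 0 < H V / a := div_pos (Hpos V hV0) ha
    have hUeq : a * (H V / a) = H V := by field_simp
    have hVeq' : b * V = G (H V / a) := hVG.symm
    -- strict monotonicity of z ↦ G (H z / a) / z
    have theta_strict : ∀ x y, 0 < x → x < y → G (H y / a) / y < G (H x / a) / x := by
      intro x y hx hxy
      have hy : 0 < y := lt_trans hx hxy
      have hwx : 0 < H x / a := div_pos (Hpos x hx) ha
      have hwy : 0 < H y / a := div_pos (Hpos y hy) ha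
      have hwxy : H x / a < H y / a := by
        have hm := Hmono (mem_Ici.2 (le_of_lt hx)) (mem_Ici.2 (le_of_lt hy)) hxy
        exact (div_lt_div_iff_of_pos_right ha).2 hm
      have hA : G (H y / a) / (H y / a) < G (H x / a) / (H x / a) :=
        hGdec (mem_Ioi.2 hwx) (mem_Ioi.2 hwy) hwxy
      have hB : H y / y ≤ H x / x := hHdec (mem_Ioi.2 hx) (mem_Ioi.2 hy) (le_of_lt hxy)
      have hApos : 0 < G (H y / a) / (H y / a) := div_pos (Gpos _ hwy) hwy
      have hBpos : 0 < H y / y := div_pos (Hpos y hy) hy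
      have hident : ∀ z, 0 < z → G (H z / a) / (H z / a) * (H z / z / a) = G (H z / a) / z := by
        intro z hz
        have := Hpos z hz
        field_simp
      rw [← hident x hx, ← hident y hy]
      have hBa : H y / y / a ≤ H x / x / a := (div_le_div_iff_of_pos_right ha).2 hB
      have hBapos : 0 < H y / y / a := div_pos hBpos ha
      nlinarith
    obtain ⟨U, hUdef⟩ : ∃ U : ℝ, U = H V / a := ⟨_, rfl⟩
    have hU0' : 0 < U := by rw [hUdef]; exact hU0
    have hUeq' : a * U = H V := by rw [hUdef]; exact hUeq
    have hGU : G U = b * V := by rw [hUdef]; exact hVG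
    -- uniqueness
    have uniq : ∀ U' V' : ℝ, 0 < U' → 0 < V' → a * U' = H V' → b * V' = G U' →
        U' = U ∧ V' = V := by
      intro U' V' hU' hV' hae hbe
      have hU'd : U' = H V' / a := by field_simp; linarith
      have hth' : G (H V' / a) / V' = b := by
        rw [← hU'd, ← hbe]
        field_simp
      have hthV : G (H V / a) / V = b := by
        rw [hVG]
        field_simp
      have hVV : V' = V := by
        rcases lt_trichotomy V' V with h | h | h
        · exfalso
          have := theta_strict V' V hV' h
          rw [hth', hthV] at this
          exact lt_irrefl _ this
        · exact h
        · exfalso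
          have := theta_strict V V' hV0 h
          rw [hth', hthV] at this
          exact lt_irrefl _ this
      refine ⟨?_, hVV⟩
      rw [hU'd, hVV, hUdef]
    -- the contraction map F
    set F : ℝ → ℝ := fun l => (l + G (l*U) / (b*V)) / 2 with hF_def
    have hbV : 0 < b*V := mul_pos hb hV0
    have hFgt : ∀ l, 1 < l → 1 < F l ∧ F l < l := by
      intro l hl
      have h1 : G U ≤ G (l*U) := Gmono.monotoneOn (mem_Ici.2 hU0'.le)
        (mem_Ici.2 (mul_pos (lt_trans one_pos hl) hU0').le)
        (le_mul_of_one_le_left hU0'.le hl.le)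
      rw [hGU] at h1
      have h2 : G (l*U) < l * G U := Gup_strict U l hU0' hl
      rw [hGU] at h2
      have hΦ1 : 1 ≤ G (l*U)/(b*V) := (one_le_div hbV).2 h1
      have hΦl : G (l*U)/(b*V) < l := by rw [div_lt_iff₀ hbV]; exact h2
      constructor
      · show 1 < (l + G (l*U)/(b*V))/2; linarith
      · show (l + G (l*U)/(b*V))/2 < l; linarith
    have hFlt : ∀ l, 0 < l → l < 1 → l < F l ∧ F l < 1 := by
      intro l hl0 hl1
      have h1 : G (l*U) ≤ G U := Gmono.monotoneOn (mem_Ici.2 (mul_pos hl0 hU0').le)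
        (mem_Ici.2 hU0'.le) (mul_le_of_le_one_left hU0'.le hl1.le)
      rw [hGU] at h1
      have h2 : l * G U < G (l*U) := Gdown_strict U l hU0' hl0 hl1
      rw [hGU] at h2
      have hΦ1 : G (l*U)/(b*V) ≤ 1 := (div_le_one hbV).2 h1
      have hΦl : l < G (l*U)/(b*V) := by rw [lt_div_iff₀ hbV]; exact h2
      constructor
      · show l < (l + G (l*U)/(b*V))/2; linarith
      · show (l + G (l*U)/(b*V))/2 < 1; linarith
    have hFcontAt : ∀ l : ℝ, 0 < l → ContinuousAt F l := by
      intro l hl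
      have hlU : 0 < l*U := mul_pos hl hU0'
      have hGat : ContinuousAt G (l*U) :=
        ((hG _ hlU.le).hasDerivAt (Ici_mem_nhds hlU)).continuousAt
      have h1 : ContinuousAt (fun l : ℝ => l*U) l := continuousAt_id.mul continuousAt_const
      have h2 : ContinuousAt (fun l : ℝ => G (l*U)) l := hGat.comp (x := l) h1
      have h3 : ContinuousAt (fun l : ℝ => l + G (l*U)/(b*V)) l :=
        continuousAt_id.add (h2.div_const _)
      exact h3.div_const 2
    -- initial barriers
    obtain ⟨lam0, hlam0, hulam0, hvlam0⟩ : ∃ lam0 : ℝ, 1 < lam0 ∧ u 0 < lam0*U ∧ v 0 < lam0*V := by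
      refine ⟨max 1 (max (u 0/U) (v 0/V)) + 1, ?_, ?_, ?_⟩
      · have := le_max_left 1 (max (u 0/U) (v 0/V)); linarith
      · have h1 : u 0/U < max 1 (max (u 0/U) (v 0/V)) + 1 := by
          have h2 := le_max_left (u 0/U) (v 0/V)
          have h3 := le_max_right 1 (max (u 0/U) (v 0/V))
          linarith
        have := (div_lt_iff₀ hU0').1 h1
        linarith
      · have h1 : v 0/V < max 1 (max (u 0/U) (v 0/V)) + 1 := by
          have h2 := le_max_right (u 0/U) (v 0/V)
          have h3 := le_max_right 1 (max (u 0/U) (v 0/V))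
          linarith
        have := (div_lt_iff₀ hV0).1 h1
        linarith
    have up0 : ∀ t ≥ (0:ℝ), u t < lam0*U ∧ v t < lam0*V := by
      apply my_inv ha hb (f' := fun t => -(a*u t) + H (v t))
        (g' := fun t => -(b*v t) + G (u t)) hu hv ?_ ?_ hulam0 hvlam0
      · intro t ht hvt
        show -(a*u t) + H (v t) ≤ -a*(u t - lam0*U)
        have hvp := (pos t ht).2
        have hm : H (v t) ≤ H (lam0*V) := Hmono.monotoneOn (mem_Ici.2 hvp.le)
          (mem_Ici.2 (mul_pos (lt_trans one_pos hlam0) hV0).le) hvt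
        have hs : H (lam0*V) ≤ lam0 * H V := Hup V lam0 hV0 hlam0.le
        rw [← hUeq'] at hs
        linarith
      · intro t ht hut
        show -(b*v t) + G (u t) ≤ -b*(v t - lam0*V)
        have hup := (pos t ht).1
        have hm : G (u t) ≤ G (lam0*U) := Gmono.monotoneOn (mem_Ici.2 hup.le)
          (mem_Ici.2 (mul_pos (lt_trans one_pos hlam0) hU0').le) hut
        have hs : G (lam0*U) ≤ lam0 * G U := Gup U lam0 hU0' hlam0.le
        rw [hGU] at hs
        linarith
    obtain ⟨e0, he0pos, he01, hue0, hve0⟩ :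
        ∃ e : ℝ, 0 < e ∧ e < 1 ∧ e*U < u 0 ∧ e*V < v 0 := by
      refine ⟨min 1 (min (u 0/U) (v 0/V)) / 2, ?_, ?_, ?_, ?_⟩
      · have h1 : 0 < min 1 (min (u 0/U) (v 0/V)) :=
          lt_min one_pos (lt_min (div_pos hu0 hU0') (div_pos hv0 hV0))
        linarith
      · have h1 := min_le_left 1 (min (u 0/U) (v 0/V)); linarith
      · have h1 : min 1 (min (u 0/U) (v 0/V)) / 2 < u 0/U := by
          have h2 := min_le_left (u 0/U) (v 0/V)
          have h3 := min_le_right 1 (min (u 0/U) (v 0/V))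
          have h4 : 0 < u 0 / U := div_pos hu0 hU0'
          linarith
        have := (lt_div_iff₀ hU0').1 h1
        linarith
      · have h1 : min 1 (min (u 0/U) (v 0/V)) / 2 < v 0/V := by
          have h2 := min_le_right (u 0/U) (v 0/V)
          have h3 := min_le_right 1 (min (u 0/U) (v 0/V))
          have h4 : 0 < v 0 / V := div_pos hv0 hV0
          linarith
        have := (lt_div_iff₀ hV0).1 h1
        linarith
    have low0 : ∀ t ≥ (0:ℝ), e0*U < u t ∧ e0*V < v t := by
      have key := my_inv ha hb (f := fun t => -u t) (g := fun t => -v t)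
        (f' := fun t => -(-(a*u t) + H (v t))) (g' := fun t => -(-(b*v t) + G (u t)))
        (fun t ht => (hu t ht).neg) (fun t ht => (hv t ht).neg)
        (K1 := -(e0*U)) (K2 := -(e0*V)) ?_ ?_
        (by show -u 0 < -(e0*U); linarith) (by show -v 0 < -(e0*V); linarith)
      · intro t ht
        have h := key t ht
        have h1 : -u t < -(e0*U) := h.1
        have h2 : -v t < -(e0*V) := h.2
        exact ⟨by linarith, by linarith⟩
      · intro t ht hvt
        have hvt' : e0*V ≤ v t := by
          have h : -v t ≤ -(e0*V) := hvt
          linarith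
        show -(-(a*u t) + H (v t)) ≤ -a*((-u t) - (-(e0*U)))
        have he0V : (0:ℝ) ≤ e0*V := (mul_pos he0pos hV0).le
        have hm : H (e0*V) ≤ H (v t) := Hmono.monotoneOn (mem_Ici.2 he0V)
          (mem_Ici.2 (le_trans he0V hvt')) hvt'
        have hs : e0 * H V ≤ H (e0*V) := Hdown V e0 hV0 he0pos he01.le
        rw [← hUeq'] at hs
        linarith
      · intro t ht hut
        have hut' : e0*U ≤ u t := by
          have h : -u t ≤ -(e0*U) := hut
          linarith
        show -(-(b*v t) + G (u t)) ≤ -b*((-v t) - (-(e0*V)))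
        have he0U : (0:ℝ) ≤ e0*U := (mul_pos he0pos hU0').le
        have hm : G (e0*U) ≤ G (u t) := Gmono.monotoneOn (mem_Ici.2 he0U)
          (mem_Ici.2 (le_trans he0U hut')) hut'
        have hs : e0 * G U ≤ G (e0*U) := Gdown U e0 hU0' he0pos he01.le
        rw [hGU] at hs
        linarith
    -- improvement steps
    have key_up : ∀ l, 1 < l → (∃ T, 0 ≤ T ∧ ∀ t ≥ T, u t ≤ l*U ∧ v t ≤ l*V) →
        (∃ T, 0 ≤ T ∧ ∀ t ≥ T, u t ≤ F l*U ∧ v t ≤ F l*V) := by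
      rintro l hl ⟨T, hT, hTb⟩
      have h1 : G U ≤ G (l*U) := Gmono.monotoneOn (mem_Ici.2 hU0'.le)
        (mem_Ici.2 (mul_pos (lt_trans one_pos hl) hU0').le)
        (le_mul_of_one_le_left hU0'.le hl.le)
      rw [hGU] at h1
      have h2 : G (l*U) < l * G U := Gup_strict U l hU0' hl
      rw [hGU] at h2
      have hΦ1 : 1 ≤ G (l*U)/(b*V) := (one_le_div hbV).2 h1
      have hΦl : G (l*U)/(b*V) < l := by rw [div_lt_iff₀ hbV]; exact h2
      have hΦF : G (l*U)/(b*V) < F l := by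
        show G (l*U)/(b*V) < (l + G (l*U)/(b*V))/2
        linarith
      have hFll : F l < l := (hFgt l hl).2
      obtain ⟨m1, hm1a, hm1b, hm1c⟩ :
          ∃ m1 : ℝ, G (l*U)/(b*V) < m1 ∧ m1 < F l ∧ 1 ≤ m1 :=
        ⟨(G (l*U)/(b*V) + F l)/2, by linarith, by linarith, by linarith⟩
      obtain ⟨T1, hT1, hT1b⟩ := my_decay_eventually (c := b) (M := (G (l*U)/(b*V))*V)
        (M' := m1*V) (T := T) hb (mul_lt_mul_of_pos_right hm1a hV0) (f := v)
        (f' := fun t => -(b*v t) + G (u t)) (fun t ht => hv t (le_trans hT ht))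
        (by
          intro t ht
          have htt : t ≥ (0:ℝ) := le_trans hT ht
          have hup := (pos t htt).1
          have hm : G (u t) ≤ G (l*U) := Gmono.monotoneOn (mem_Ici.2 hup.le)
            (mem_Ici.2 (mul_pos (lt_trans one_pos hl) hU0').le) (hTb t ht).1
          show -(b*v t) + G (u t) ≤ -b*(v t - (G (l*U)/(b*V))*V)
          have hid : (G (l*U)/(b*V))*V*b = G (l*U) := by field_simp
          linarith)
      obtain ⟨T2, hT2, hT2b⟩ := my_decay_eventually (c := a) (M := m1*U) (M' := F l*U)
        (T := T1) ha (mul_lt_mul_of_pos_right hm1b hU0') (f := u)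
        (f' := fun t => -(a*u t) + H (v t))
        (fun t ht => hu t (le_trans (le_trans hT hT1) ht))
        (by
          intro t ht
          have htt : t ≥ (0:ℝ) := le_trans (le_trans hT hT1) ht
          have hvp := (pos t htt).2
          have hm : H (v t) ≤ H (m1*V) := Hmono.monotoneOn (mem_Ici.2 hvp.le)
            (mem_Ici.2 (mul_pos (lt_of_lt_of_le one_pos hm1c) hV0).le) (hT1b t ht)
          have hs : H (m1*V) ≤ m1 * H V := Hup V m1 hV0 hm1c
          rw [← hUeq'] at hs
          show -(a*u t) + H (v t) ≤ -a*(u t - m1*U)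
          linarith)
      exact ⟨T2, le_trans (le_trans hT hT1) hT2, fun t ht =>
        ⟨hT2b t ht, le_trans (hT1b t (le_trans hT2 ht))
          (mul_le_mul_of_nonneg_right hm1b.le hV0.le)⟩⟩
    have key_low : ∀ e, 0 < e → e < 1 → (∃ T, 0 ≤ T ∧ ∀ t ≥ T, e*U ≤ u t ∧ e*V ≤ v t) →
        (∃ T, 0 ≤ T ∧ ∀ t ≥ T, F e*U ≤ u t ∧ F e*V ≤ v t) := by
      rintro e he0 he1 ⟨T, hT, hTb⟩
      have h1 : G (e*U) ≤ G U := Gmono.monotoneOn (mem_Ici.2 (mul_pos he0 hU0').le)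
        (mem_Ici.2 hU0'.le) (mul_le_of_le_one_left hU0'.le he1.le)
      rw [hGU] at h1
      have h2 : e * G U < G (e*U) := Gdown_strict U e hU0' he0 he1
      rw [hGU] at h2
      have hΦ1 : G (e*U)/(b*V) ≤ 1 := (div_le_one hbV).2 h1
      have hΦe : e < G (e*U)/(b*V) := by rw [lt_div_iff₀ hbV]; exact h2
      have hFee : e < F e := (hFlt e he0 he1).1
      have hFe0 : 0 < F e := lt_trans he0 hFee
      have hΦF : F e < G (e*U)/(b*V) := by
        show (e + G (e*U)/(b*V))/2 < G (e*U)/(b*V)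
        linarith
      obtain ⟨m1, hm1a, hm1b, hm1c, hm1p⟩ :
          ∃ m1 : ℝ, m1 < G (e*U)/(b*V) ∧ F e < m1 ∧ m1 ≤ 1 ∧ 0 < m1 :=
        ⟨(F e + G (e*U)/(b*V))/2, by linarith, by linarith, by linarith, by linarith⟩
      obtain ⟨T1, hT1, hT1b⟩ := my_decay_eventually (c := b) (M := -((G (e*U)/(b*V))*V))
        (M' := -(m1*V)) (T := T) hb
        (neg_lt_neg (mul_lt_mul_of_pos_right hm1a hV0)) (f := fun t => -v t)
        (f' := fun t => -(-(b*v t) + G (u t)))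
        (fun t ht => (hv t (le_trans hT ht)).neg)
        (by
          intro t ht
          have he0U : (0:ℝ) ≤ e*U := (mul_pos he0 hU0').le
          have hm : G (e*U) ≤ G (u t) := Gmono.monotoneOn (mem_Ici.2 he0U)
            (mem_Ici.2 (le_trans he0U (hTb t ht).1)) (hTb t ht).1
          show -(-(b*v t) + G (u t)) ≤ -b*((-v t) - (-((G (e*U)/(b*V))*V)))
          have hid : (G (e*U)/(b*V))*V*b = G (e*U) := by field_simp
          linarith)
      obtain ⟨T2, hT2, hT2b⟩ := my_decay_eventually (c := a) (M := -(m1*U)) (M' := -(F e*U))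
        (T := T1) ha (neg_lt_neg (mul_lt_mul_of_pos_right hm1b hU0'))
        (f := fun t => -u t)
        (f' := fun t => -(-(a*u t) + H (v t)))
        (fun t ht => (hu t (le_trans (le_trans hT hT1) ht)).neg)
        (by
          intro t ht
          have hvt' : m1*V ≤ v t := by
            have h : -v t ≤ -(m1*V) := hT1b t ht
            linarith
          have hm1V : (0:ℝ) ≤ m1*V := (mul_pos hm1p hV0).le
          have hm : H (m1*V) ≤ H (v t) := Hmono.monotoneOn (mem_Ici.2 hm1V)
            (mem_Ici.2 (le_trans hm1V hvt')) hvt'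
          have hs : m1 * H V ≤ H (m1*V) := Hdown V m1 hV0 hm1p hm1c
          rw [← hUeq'] at hs
          show -(-(a*u t) + H (v t)) ≤ -a*((-u t) - (-(m1*U)))
          linarith)
      refine ⟨T2, le_trans (le_trans hT hT1) hT2, fun t ht => ?_⟩
      have hA : -u t ≤ -(F e*U) := hT2b t ht
      have hB : -v t ≤ -(m1*V) := hT1b t (le_trans hT2 ht)
      constructor
      · linarith
      · have : F e*V ≤ m1*V := mul_le_mul_of_nonneg_right hm1b.le hV0.le
        linarith
    -- upper iterates
    obtain ⟨x, hx0, hx_succ⟩ : ∃ x : ℕ → ℝ, x 0 = lam0 ∧ ∀ n, x (n+1) = F (x n) :=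
      ⟨fun n => F^[n] lam0, rfl, fun n => Function.iterate_succ_apply' F n lam0⟩
    have hx1 : ∀ n, 1 < x n := by
      intro n
      induction n with
      | zero => rw [hx0]; exact hlam0
      | succ n ih => rw [hx_succ]; exact (hFgt _ ih).1
    have hxanti : Antitone x :=
      antitone_nat_of_succ_le (fun n => by rw [hx_succ]; exact (hFgt _ (hx1 n)).2.le)
    have hxbdd : BddBelow (range x) :=
      ⟨1, fun w hw => by obtain ⟨n, rfl⟩ := hw; exact (hx1 n).le⟩
    have hxlim : Tendsto x atTop (nhds (⨅ n, x n)) := tendsto_atTop_ciInf hxanti hxbdd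
    have hL1 : 1 ≤ ⨅ n, x n := le_ciInf (fun n => (hx1 n).le)
    have hLeq : (⨅ n, x n) = 1 := by
      have hLfix : F (⨅ n, x n) = (⨅ n, x n) := by
        have h1 : Tendsto (fun n => x (n+1)) atTop (nhds (⨅ n, x n)) :=
          hxlim.comp (tendsto_add_atTop_nat 1)
        have h2 : Tendsto (fun n => F (x n)) atTop (nhds (F (⨅ n, x n))) :=
          ((hFcontAt _ (by linarith)).tendsto).comp hxlim
        have h3 : (fun n => x (n+1)) = fun n => F (x n) := funext hx_succ
        rw [h3] at h1
        exact tendsto_nhds_unique h2 h1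
      rcases eq_or_lt_of_le hL1 with h | h
      · exact h.symm
      · exfalso
        have := (hFgt _ h).2
        rw [hLfix] at this
        exact lt_irrefl _ this
    have Bup : ∀ n, ∃ T, 0 ≤ T ∧ ∀ t ≥ T, u t ≤ x n*U ∧ v t ≤ x n*V := by
      intro n
      induction n with
      | zero =>
        rw [hx0]
        exact ⟨0, le_refl 0, fun t ht => ⟨(up0 t ht).1.le, (up0 t ht).2.le⟩⟩
      | succ n ih =>
        rw [hx_succ]
        exact key_up (x n) (hx1 n) ih
    -- lower iterates
    obtain ⟨y, hy0, hy_succ⟩ : ∃ y : ℕ → ℝ, y 0 = e0 ∧ ∀ n, y (n+1) = F (y n) :=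
      ⟨fun n => F^[n] e0, rfl, fun n => Function.iterate_succ_apply' F n e0⟩
    have hy1 : ∀ n, 0 < y n ∧ y n < 1 := by
      intro n
      induction n with
      | zero => rw [hy0]; exact ⟨he0pos, he01⟩
      | succ n ih =>
        rw [hy_succ]
        exact ⟨lt_trans ih.1 (hFlt _ ih.1 ih.2).1, (hFlt _ ih.1 ih.2).2⟩
    have hymono : Monotone y :=
      monotone_nat_of_le_succ (fun n => by rw [hy_succ]; exact (hFlt _ (hy1 n).1 (hy1 n).2).1.le)
    have hybdd : BddAbove (range y) :=
      ⟨1, fun w hw => by obtain ⟨n, rfl⟩ := hw; exact (hy1 n).2.le⟩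
    have hylim : Tendsto y atTop (nhds (⨆ n, y n)) := tendsto_atTop_ciSup hymono hybdd
    have hM1 : (⨆ n, y n) ≤ 1 := ciSup_le (fun n => (hy1 n).2.le)
    have hM0 : 0 < ⨆ n, y n := lt_of_lt_of_le he0pos (by rw [← hy0]; exact le_ciSup hybdd 0)
    have hMeq : (⨆ n, y n) = 1 := by
      have hMfix : F (⨆ n, y n) = (⨆ n, y n) := by
        have h1 : Tendsto (fun n => y (n+1)) atTop (nhds (⨆ n, y n)) :=
          hylim.comp (tendsto_add_atTop_nat 1)
        have h2 : Tendsto (fun n => F (y n)) atTop (nhds (F (⨆ n, y n))) :=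
          ((hFcontAt _ hM0).tendsto).comp hylim
        have h3 : (fun n => y (n+1)) = fun n => F (y n) := funext hy_succ
        rw [h3] at h1
        exact tendsto_nhds_unique h2 h1
      rcases eq_or_lt_of_le hM1 with h | h
      · exact h
      · exfalso
        have := (hFlt _ hM0 h).1
        rw [hMfix] at this
        exact lt_irrefl _ this
    have Blow : ∀ n, ∃ T, 0 ≤ T ∧ ∀ t ≥ T, y n*U ≤ u t ∧ y n*V ≤ v t := by
      intro n
      induction n with
      | zero =>
        rw [hy0]
        exact ⟨0, le_refl 0, fun t ht => ⟨(low0 t ht).1.le, (low0 t ht).2.le⟩⟩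
      | succ n ih =>
        rw [hy_succ]
        exact key_low (y n) (hy1 n).1 (hy1 n).2 ih
    -- conclusion
    have conv : ∀ (w : ℝ → ℝ) (W : ℝ), 0 < W →
        (∀ n, ∃ T, 0 ≤ T ∧ ∀ t ≥ T, w t ≤ x n * W) →
        (∀ n, ∃ T, 0 ≤ T ∧ ∀ t ≥ T, y n * W ≤ w t) →
        Tendsto w atTop (nhds W) := by
      intro w W hW hupb hlowb
      rw [Metric.tendsto_atTop]
      intro ε hε
      have hxW : Tendsto (fun n => x n * W) atTop (nhds W) := by
        have h := hxlim.mul_const W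
        rw [hLeq, one_mul] at h
        exact h
      have hyW : Tendsto (fun n => y n * W) atTop (nhds W) := by
        have h := hylim.mul_const W
        rw [hMeq, one_mul] at h
        exact h
      obtain ⟨n1, hn1⟩ := (hxW.eventually_lt_const (by linarith : W < W + ε)).exists
      obtain ⟨n2, hn2⟩ := (hyW.eventually_const_lt (by linarith : W - ε < W)).exists
      obtain ⟨T1, hT1, hT1b⟩ := hupb n1
      obtain ⟨T2, hT2, hT2b⟩ := hlowb n2
      refine ⟨max T1 T2, fun t ht => ?_⟩
      have h1 := hT1b t (le_trans (le_max_left _ _) ht)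
      have h2 := hT2b t (le_trans (le_max_right _ _) ht)
      rw [Real.dist_eq, abs_lt]
      constructor <;> linarith
    have hu_t : Tendsto u atTop (nhds U) := by
      apply conv u U hU0'
      · intro n
        obtain ⟨T, hT, hTb⟩ := Bup n
        exact ⟨T, hT, fun t ht => (hTb t ht).1⟩
      · intro n
        obtain ⟨T, hT, hTb⟩ := Blow n
        exact ⟨T, hT, fun t ht => (hTb t ht).1⟩
    have hv_t : Tendsto v atTop (nhds V) := by
      apply conv v V hV0
      · intro n
        obtain ⟨T, hT, hTb⟩ := Bup n
        exact ⟨T, hT, fun t ht => (hTb t ht).2⟩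
      · intro n
        obtain ⟨T, hT, hTb⟩ := Blow n
        exact ⟨T, hT, fun t ht => (hTb t ht).2⟩
    exact ⟨U, V, hU0', hV0, hUeq', by rw [hGU], uniq, hu_t.prodMk_nhds hv_t⟩
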